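/- For every f, g ≥ 2 and every n ≥ f, there exists an n-vertex f-uniform, f-partite hypergraph with at least Ω(n^{1+1/g}) edges (the implied constant depending on f and g) and containing no Berge cycle of length at most g. -/

import Mathlib

open Finset

lemma sum_powerset_weight {α : Type*} [DecidableEq α] (B : Finset α) (p q : ℝ) :
    ∑ S ∈ B.powerset, p ^ S.card * q ^ (B.card - S.card) = (p + q) ^ B.card := by
  have h := Finset.prod_add (fun _ : α => p) (fun _ => q) B
  simp only [Finset.prod_const] at h
  rw [h]
  refine Finset.sum_congr rfl fun S hS => ?_
  rw [Finset.mem_powerset] at hS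
  rw [Finset.card_sdiff_of_subset hS]

lemma sum_powerset_ind {α : Type*} [DecidableEq α] (A T : Finset α) (hT : T ⊆ A) (p : ℝ) :
    ∑ S ∈ A.powerset, (if T ⊆ S then p ^ S.card * (1 - p) ^ (A.card - S.card) else 0)
      = p ^ T.card := by
  rw [← Finset.sum_filter]
  have key : ∑ S ∈ A.powerset.filter (T ⊆ ·), p ^ S.card * (1 - p) ^ (A.card - S.card)
      = ∑ S' ∈ (A \ T).powerset, p ^ T.card * (p ^ S'.card * (1 - p) ^ ((A \ T).card - S'.card)) := by
    refine Finset.sum_nbij' (fun S => S \ T) (fun S' => S' ∪ T) ?_ ?_ ?_ ?_ ?_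
    · intro S hS
      simp only [Finset.mem_filter, Finset.mem_powerset] at hS ⊢
      exact Finset.sdiff_subset_sdiff hS.1 le_rfl
    · intro S' hS'
      simp only [Finset.mem_filter, Finset.mem_powerset] at hS' ⊢
      constructor
      · exact Finset.union_subset (hS'.trans (Finset.sdiff_subset)) hT
      · exact Finset.subset_union_right
    · intro S hS
      simp only [Finset.mem_filter, Finset.mem_powerset] at hS
      exact Finset.sdiff_union_of_subset hS.2
    · intro S' hS'
      simp only [Finset.mem_powerset] at hS'
      have hd : Disjoint S' T := Finset.disjoint_of_subset_left hS' Finset.sdiff_disjoint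
      rw [Finset.union_sdiff_cancel_right hd]
    · intro S hS
      simp only [Finset.mem_filter, Finset.mem_powerset] at hS
      have h1 : T.card ≤ S.card := Finset.card_le_card hS.2
      have h2 : S.card ≤ A.card := Finset.card_le_card hS.1
      have hc : (S \ T).card = S.card - T.card := Finset.card_sdiff_of_subset hS.2
      have hc2 : (A \ T).card = A.card - T.card := Finset.card_sdiff_of_subset hT
      rw [← mul_assoc, ← pow_add, hc, hc2]
      congr 1
      · congr 1; omega
      · congr 1; omega
  rw [key, ← Finset.mul_sum, sum_powerset_weight]
  norm_num


open Finset

section Trans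

variable {n f : ℕ} (χ : Fin n → Fin f)

def trSet : Finset (Finset (Fin n)) :=
  univ.filter fun e => ∀ p : Fin f, (e.filter fun x => χ x = p).card = 1

lemma mem_trSet {e : Finset (Fin n)} :
    e ∈ trSet χ ↔ ∀ p : Fin f, (e.filter fun x => χ x = p).card = 1 := by
  simp [trSet]

lemma tr_filter_eq {e : Finset (Fin n)} (he : e ∈ trSet χ) {x : Fin n} (hx : x ∈ e) :
    e.filter (fun z => χ z = χ x) = {x} := by
  rw [mem_trSet] at he
  obtain ⟨a, ha⟩ := Finset.card_eq_one.mp (he (χ x))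
  have hxa : x ∈ e.filter (fun z => χ z = χ x) := Finset.mem_filter.mpr ⟨hx, rfl⟩
  rw [ha] at hxa ⊢
  rw [Finset.mem_singleton] at hxa
  rw [hxa]

lemma tr_card {e : Finset (Fin n)} (he : e ∈ trSet χ) : e.card = f := by
  rw [mem_trSet] at he
  rw [Finset.card_eq_sum_card_fiberwise (f := χ) (t := univ) (fun x _ => mem_univ _)]
  simp [he]

/-- selector function -/
noncomputable def sel (d : Fin n) (e : Finset (Fin n)) (j : Fin f) : Fin n :=
  ((e.filter fun z => χ z = j).min).getD d

lemma sel_eq {d : Fin n} {e : Finset (Fin n)} (he : e ∈ trSet χ) {x : Fin n} (hx : x ∈ e) :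
    sel χ d e (χ x) = x := by
  unfold sel
  rw [tr_filter_eq χ he hx, Finset.min_singleton]
  rfl

lemma sel_mem {d : Fin n} {e : Finset (Fin n)} (he : e ∈ trSet χ) (j : Fin f) :
    sel χ d e j ∈ e ∧ χ (sel χ d e j) = j := by
  rw [mem_trSet] at he
  obtain ⟨a, ha⟩ := Finset.card_eq_one.mp (he j)
  have : sel χ d e j = a := by unfold sel; rw [ha, Finset.min_singleton]; rfl
  rw [this]
  have := ha ▸ Finset.mem_singleton_self a
  exact ⟨(Finset.mem_filter.mp this).1, (Finset.mem_filter.mp this).2⟩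

lemma tr_eq_image {d : Fin n} {e : Finset (Fin n)} (he : e ∈ trSet χ) :
    e = univ.image (sel χ d e) := by
  ext z
  constructor
  · intro hz
    rw [Finset.mem_image]
    exact ⟨χ z, mem_univ _, sel_eq χ he hz⟩
  · intro hz
    rw [Finset.mem_image] at hz
    obtain ⟨j, _, hj⟩ := hz
    exact hj ▸ (sel_mem χ he j).1

end Trans

section Count
variable {n f : ℕ} (χ : Fin n → Fin f)

lemma pair_count (hf : 2 ≤ f) {x y : Fin n} (hxy : x ≠ y) :
    ((trSet χ).filter fun e => x ∈ e ∧ y ∈ e).card ≤ n ^ (f - 2) := by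
  by_cases hc : χ x = χ y
  · -- impossible: filter is empty
    have : ((trSet χ).filter fun e => x ∈ e ∧ y ∈ e) = ∅ := by
      rw [Finset.eq_empty_iff_forall_notMem]
      intro e he
      rw [Finset.mem_filter] at he
      obtain ⟨he, hx, hy⟩ := he
      have h1 := tr_filter_eq χ he hx
      have h2 := tr_filter_eq χ he hy
      rw [hc] at h1
      rw [h1] at h2
      exact hxy (Finset.singleton_injective h2)
    simp [this]
  · -- injection via selector
    set a := χ x
    set b := χ y
    set t : Fin f → Finset (Fin n) := fun j => if j = a then {x} else if j = b then {y} else univ with ht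
    have hmaps : ∀ e ∈ (trSet χ).filter fun e => x ∈ e ∧ y ∈ e,
        sel χ x e ∈ Fintype.piFinset t := by
      intro e he
      rw [Finset.mem_filter] at he
      obtain ⟨he, hx, hy⟩ := he
      rw [Fintype.mem_piFinset]
      intro j
      by_cases hja : j = a
      · subst hja
        rw [sel_eq χ he hx]
        simp [ht]
      · by_cases hjb : j = b
        · subst hjb
          rw [sel_eq χ he hy]
          simp [ht, hja]
        · simp [ht, hja, hjb]
    have hinj : Set.InjOn (sel χ x) ((trSet χ).filter fun e => x ∈ e ∧ y ∈ e) := by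
      intro e he e' he' h
      rw [Finset.coe_filter, Set.mem_setOf_eq] at he he'
      rw [tr_eq_image χ (d := x) he.1, tr_eq_image χ (d := x) he'.1, h]
    have hcard := Finset.card_le_card_of_injOn _ hmaps hinj
    rw [Fintype.card_piFinset] at hcard
    refine hcard.trans ?_
    have hprod : ∏ j : Fin f, (t j).card = ∏ j ∈ (univ \ {a, b} : Finset (Fin f)), (t j).card := by
      rw [← Finset.prod_sdiff (Finset.subset_univ {a, b})]
      have : ∏ j ∈ ({a, b} : Finset (Fin f)), (t j).card = 1 := by
        rw [Finset.prod_pair hc]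
        simp only [ht, if_pos rfl, if_neg (fun h : b = a => hc h.symm)]
        simp
      rw [this, mul_one]
    rw [hprod]
    have hsub : ∀ j ∈ (univ \ {a, b} : Finset (Fin f)), (t j).card = n := by
      intro j hj
      simp only [Finset.mem_sdiff, Finset.mem_insert, Finset.mem_singleton] at hj
      push_neg at hj
      simp [ht, hj.2.1, hj.2.2]
    rw [Finset.prod_congr rfl hsub, Finset.prod_const]
    have : (univ \ {a, b} : Finset (Fin f)).card = f - 2 := by
      rw [Finset.card_sdiff_of_subset (Finset.subset_univ _)]
      rw [Finset.card_pair hc]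
      simp
    rw [this]

end Count
def structPairs {n : ℕ} (k : ℕ) (S : Finset (Finset (Fin n))) :
    Finset ((Fin k → Fin n) × (Fin k → Finset (Fin n))) :=
  univ.filter fun pe => Function.Injective pe.1 ∧ Function.Injective pe.2 ∧
    ∀ i, pe.2 i ∈ S ∧ pe.1 i ∈ pe.2 i ∧ pe.1 (finRotate k i) ∈ pe.2 i

lemma finRotate_ne {m : ℕ} (i : Fin (m + 2)) : finRotate (m + 2) i ≠ i := by
  rw [finRotate_succ_apply]
  intro h
  have h1 : (1 : Fin (m + 2)) = 0 :=
    add_left_cancel (a := i) (b := (1 : Fin (m+2))) (c := 0) (by simp [h])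
  rw [Fin.one_eq_zero_iff] at h1
  omega

lemma structPairs_count {n f : ℕ} (χ : Fin n → Fin f) (hf : 2 ≤ f) (k : ℕ) (hk : 2 ≤ k) :
    (structPairs k (trSet χ)).card ≤ n ^ k * (n ^ (f - 2)) ^ k := by
  obtain ⟨m, rfl⟩ : ∃ m, k = m + 2 := ⟨k - 2, by omega⟩
  rw [Finset.card_eq_sum_card_fiberwise (f := Prod.fst) (t := univ) (fun x _ => mem_univ _)]
  have hfiber : ∀ v : Fin (m+2) → Fin n,
      ((structPairs (m+2) (trSet χ)).filter fun pe => pe.1 = v).card ≤ (n ^ (f - 2)) ^ (m+2) := by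
    intro v
    by_cases hv : Function.Injective v
    · set B : Fin (m+2) → Finset (Finset (Fin n)) :=
        fun i => (trSet χ).filter fun E => v i ∈ E ∧ v (finRotate (m+2) i) ∈ E with hB
      have hmaps : ∀ pe ∈ (structPairs (m+2) (trSet χ)).filter fun pe => pe.1 = v,
          pe.2 ∈ Fintype.piFinset B := by
        intro pe hpe
        rw [Finset.mem_filter] at hpe
        obtain ⟨hpe, hfst⟩ := hpe
        simp only [structPairs, Finset.mem_filter, Finset.mem_univ, true_and] at hpe
        rw [Fintype.mem_piFinset]
        intro i
        obtain ⟨h1, h2, h3⟩ := hpe.2.2 i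
        rw [hfst] at h2 h3
        exact Finset.mem_filter.mpr ⟨h1, h2, h3⟩
      have hinj : Set.InjOn Prod.snd
          ((((structPairs (m+2) (trSet χ)).filter fun pe => pe.1 = v) : Finset ((Fin (m+2) → Fin n) × (Fin (m+2) → Finset (Fin n)))) : Set ((Fin (m+2) → Fin n) × (Fin (m+2) → Finset (Fin n)))) := by
        intro pe hpe pe' hpe' h
        rw [Finset.coe_filter, Set.mem_setOf_eq] at hpe hpe'
        exact Prod.ext (hpe.2.trans hpe'.2.symm) h
      have hcard := Finset.card_le_card_of_injOn _ hmaps hinj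
      rw [Fintype.card_piFinset] at hcard
      refine hcard.trans ?_
      have : ∀ i : Fin (m+2), (B i).card ≤ n ^ (f - 2) := by
        intro i
        have hne : v i ≠ v (finRotate (m+2) i) := fun h => finRotate_ne i ((hv h).symm)
        exact pair_count χ hf hne
      calc ∏ i, (B i).card ≤ ∏ _i : Fin (m+2), n ^ (f-2) := Finset.prod_le_prod (fun _ _ => Nat.zero_le _) (fun i _ => this i)
        _ = (n ^ (f-2)) ^ (m+2) := by rw [Finset.prod_const]; simp
    · have : ((structPairs (m+2) (trSet χ)).filter fun pe => pe.1 = v) = ∅ := by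
        rw [Finset.eq_empty_iff_forall_notMem]
        intro pe hpe
        rw [Finset.mem_filter] at hpe
        obtain ⟨hpe, hfst⟩ := hpe
        simp only [structPairs, Finset.mem_filter, Finset.mem_univ, true_and] at hpe
        exact hv (hfst ▸ hpe.1)
      simp [this]
  calc ∑ v : Fin (m+2) → Fin n, ((structPairs (m+2) (trSet χ)).filter fun pe => pe.1 = v).card
      ≤ ∑ _v : Fin (m+2) → Fin n, (n ^ (f-2)) ^ (m+2) := Finset.sum_le_sum (fun v _ => hfiber v)
    _ = n ^ (m+2) * (n ^ (f-2)) ^ (m+2) := by rw [Finset.sum_const]; simp [Finset.card_univ, mul_comm]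

section Trans
variable {n f : ℕ} (χ : Fin n → Fin f)

end Trans

/-- lower bound on number of transversals for the mod-f coloring -/
lemma trSet_card_lb (n f : ℕ) (hf : 0 < f) (hfn : f ≤ n) :
    (n / f) ^ f ≤ (trSet (n := n) (f := f) (fun x => ⟨x.val % f, Nat.mod_lt _ hf⟩)).card := by
  set m := n / f with hm
  set χ : Fin n → Fin f := fun x => ⟨x.val % f, Nat.mod_lt _ hf⟩ with hχ
  have hmf : m * f ≤ n := Nat.div_mul_le_self n f
  have hvlt : ∀ (t : Fin f → Fin m) (j : Fin f), (t j : ℕ) * f + (j : ℕ) < n := by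
    intro t j
    have h1 : (t j : ℕ) ≤ m - 1 := by have := (t j).isLt; omega
    have hm1 : 1 ≤ m := Nat.one_le_div_iff hf |>.mpr hfn
    have h2 : (t j : ℕ) * f ≤ (m - 1) * f := Nat.mul_le_mul_right f h1
    have h3 : (m - 1) * f + f = m * f := by
      have : m - 1 + 1 = m := by omega
      calc (m-1)*f + f = ((m-1)+1)*f := by ring
        _ = m * f := by rw [this]
    have := j.isLt
    omega
  set F : (Fin f → Fin m) → Finset (Fin n) :=
    fun t => univ.image (fun j : Fin f => (⟨(t j : ℕ) * f + (j : ℕ), hvlt t j⟩ : Fin n)) with hF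
  have hχF : ∀ (t : Fin f → Fin m) (j : Fin f), χ (⟨(t j : ℕ) * f + (j : ℕ), hvlt t j⟩ : Fin n) = j := by
    intro t j
    apply Fin.ext
    simp only [hχ]
    rw [Nat.mul_add_mod']
    exact Nat.mod_eq_of_lt j.isLt
  have hfilter : ∀ (t : Fin f → Fin m) (p : Fin f),
      (F t).filter (fun x => χ x = p) = {(⟨(t p : ℕ) * f + (p : ℕ), hvlt t p⟩ : Fin n)} := by
    intro t p
    ext x
    simp only [hF, Finset.mem_filter, Finset.mem_image, Finset.mem_singleton, Finset.mem_univ,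
      true_and]
    constructor
    · rintro ⟨⟨j, rfl⟩, hx⟩
      rw [hχF t j] at hx
      subst hx; rfl
    · rintro rfl
      exact ⟨⟨p, rfl⟩, hχF t p⟩
  have hmapsTo : ∀ t ∈ (univ : Finset (Fin f → Fin m)), F t ∈ trSet χ := by
    intro t _
    simp only [trSet, Finset.mem_filter, Finset.mem_univ, true_and]
    intro p
    rw [hfilter t p, Finset.card_singleton]
  have hinj : Set.InjOn F (univ : Finset (Fin f → Fin m)) := by
    intro t _ t' _ h
    funext j
    have h1 := hfilter t j
    have h2 := hfilter t' j
    rw [h] at h1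
    rw [h1] at h2
    have := Finset.singleton_injective h2
    have hv : (t j : ℕ) * f + (j : ℕ) = (t' j : ℕ) * f + (j : ℕ) := congrArg Fin.val this
    have : (t' j : ℕ) = (t j : ℕ) := by
      have := Nat.eq_of_mul_eq_mul_right hf (by omega : (t' j : ℕ) * f = (t j : ℕ) * f)
      omega
    exact (Fin.ext this).symm
  calc m ^ f = (univ : Finset (Fin f → Fin m)).card := by
        simp [Finset.card_univ]
    _ ≤ (trSet χ).card := Finset.card_le_card_of_injOn F hmapsTo hinj
lemma exp_card {α : Type*} [DecidableEq α] (A : Finset α) (p : ℝ) :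
    ∑ S ∈ A.powerset, (p ^ S.card * (1 - p) ^ (A.card - S.card)) * (S.card : ℝ)
      = p * A.card := by
  have hcard : ∀ S ∈ A.powerset, (S.card : ℝ) = ∑ a ∈ A, if a ∈ S then (1:ℝ) else 0 := by
    intro S hS
    rw [Finset.mem_powerset] at hS
    rw [Finset.sum_boole]
    congr 1
    rw [Finset.filter_mem_eq_inter, Finset.inter_eq_right.mpr hS]
  rw [Finset.sum_congr rfl (fun S hS => by rw [hcard S hS])]
  simp_rw [Finset.mul_sum]
  rw [Finset.sum_comm]
  have inner : ∀ a ∈ A, (∑ S ∈ A.powerset,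
      (p ^ S.card * (1 - p) ^ (A.card - S.card)) * (if a ∈ S then (1:ℝ) else 0)) = p := by
    intro a ha
    have : ∀ S : Finset α, (p ^ S.card * (1 - p) ^ (A.card - S.card)) * (if a ∈ S then (1:ℝ) else 0)
        = if {a} ⊆ S then p ^ S.card * (1 - p) ^ (A.card - S.card) else 0 := by
      intro S
      by_cases h : a ∈ S <;> simp [h, Finset.singleton_subset_iff]
    rw [Finset.sum_congr rfl (fun S _ => this S)]
    rw [sum_powerset_ind A {a} (Finset.singleton_subset_iff.mpr ha) p]
    simp
  rw [Finset.sum_congr rfl inner, Finset.sum_const, nsmul_eq_mul, mul_comm]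

lemma structPairs_subset_eq {n k : ℕ} {A S : Finset (Finset (Fin n))} (hS : S ⊆ A) :
    structPairs k S = (structPairs k A).filter fun pe => (univ.image pe.2) ⊆ S := by
  ext pe
  simp only [structPairs, Finset.mem_filter, Finset.mem_univ, true_and]
  constructor
  · rintro ⟨h1, h2, h3⟩
    refine ⟨⟨h1, h2, fun i => ⟨hS (h3 i).1, (h3 i).2⟩⟩, ?_⟩
    intro x hx
    rw [Finset.mem_image] at hx
    obtain ⟨i, _, rfl⟩ := hx
    exact (h3 i).1
  · rintro ⟨⟨h1, h2, h3⟩, h4⟩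
    refine ⟨h1, h2, fun i => ⟨h4 (Finset.mem_image_of_mem pe.2 (mem_univ i)), (h3 i).2⟩⟩

lemma exp_bad {n k : ℕ} (A : Finset (Finset (Fin n))) (p : ℝ) :
    ∑ S ∈ A.powerset, (p ^ S.card * (1 - p) ^ (A.card - S.card)) * ((structPairs k S).card : ℝ)
      = p ^ k * ((structPairs k A).card : ℝ) := by
  have hcard : ∀ S ∈ A.powerset, ((structPairs k S).card : ℝ)
      = ∑ pe ∈ structPairs k A, if (univ.image pe.2) ⊆ S then (1:ℝ) else 0 := by
    intro S hS
    rw [Finset.mem_powerset] at hS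
    rw [Finset.sum_boole, structPairs_subset_eq hS]
  rw [Finset.sum_congr rfl (fun S hS => by rw [hcard S hS])]
  simp_rw [Finset.mul_sum]
  rw [Finset.sum_comm]
  have inner : ∀ pe ∈ structPairs k A, (∑ S ∈ A.powerset,
      (p ^ S.card * (1 - p) ^ (A.card - S.card)) * (if (univ.image pe.2) ⊆ S then (1:ℝ) else 0))
      = p ^ k := by
    intro pe hpe
    simp only [structPairs, Finset.mem_filter, Finset.mem_univ, true_and] at hpe
    have hTA : (univ.image pe.2) ⊆ A := by
      intro x hx
      rw [Finset.mem_image] at hx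
      obtain ⟨i, _, rfl⟩ := hx
      exact (hpe.2.2 i).1
    have hTcard : (univ.image pe.2).card = k := by
      rw [Finset.card_image_of_injective _ hpe.2.1, Finset.card_univ, Fintype.card_fin]
    have : ∀ S : Finset (Finset (Fin n)),
        (p ^ S.card * (1 - p) ^ (A.card - S.card)) * (if (univ.image pe.2) ⊆ S then (1:ℝ) else 0)
        = if (univ.image pe.2) ⊆ S then p ^ S.card * (1 - p) ^ (A.card - S.card) else 0 := by
      intro S
      by_cases h : (univ.image pe.2) ⊆ S <;> simp [h]
    rw [Finset.sum_congr rfl (fun S _ => this S)]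
    rw [sum_powerset_ind A _ hTA p, hTcard]
  rw [Finset.sum_congr rfl inner, Finset.sum_const, nsmul_eq_mul, mul_comm]
lemma exists_ge {α : Type*} [DecidableEq α] (A : Finset α) (p : ℝ) (hp0 : 0 ≤ p) (hp1 : p < 1)
    (F : Finset α → ℝ) :
    ∃ S ∈ A.powerset,
      ∑ T ∈ A.powerset, (p ^ T.card * (1 - p) ^ (A.card - T.card)) * F T ≤ F S := by
  by_contra hcon
  push_neg at hcon
  set W := ∑ T ∈ A.powerset, (p ^ T.card * (1 - p) ^ (A.card - T.card)) * F T with hW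
  have h1 : ∑ T ∈ A.powerset, p ^ T.card * (1 - p) ^ (A.card - T.card) = 1 := by
    rw [sum_powerset_weight]
    norm_num
  have hμ0 : ∀ T : Finset α, 0 ≤ p ^ T.card * (1 - p) ^ (A.card - T.card) := by
    intro T
    have : (0:ℝ) ≤ 1 - p := by linarith
    positivity
  have hlt : W < ∑ T ∈ A.powerset, (p ^ T.card * (1 - p) ^ (A.card - T.card)) * W := by
    refine Finset.sum_lt_sum (fun T hT => mul_le_mul_of_nonneg_left (hcon T hT).le (hμ0 T)) ?_
    refine ⟨∅, Finset.empty_mem_powerset A, ?_⟩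
    have hpos : 0 < p ^ (∅ : Finset α).card * (1 - p) ^ (A.card - (∅ : Finset α).card) := by
      simp only [Finset.card_empty, pow_zero, one_mul, Nat.sub_zero]
      exact pow_pos (by linarith) _
    exact mul_lt_mul_of_pos_left (hcon ∅ (Finset.empty_mem_powerset A)) hpos
  rw [← Finset.sum_mul, h1, one_mul] at hlt
  exact lt_irrefl W hlt
/-- `H` has a Berge cycle of length `k`: distinct vertices `v_1,…,v_k` and distinct
edges `e_1,…,e_k` with `v_i, v_{i+1} ∈ e_i` cyclically. -/
def HasBergeCycleLen {V : Type*} (H : Finset (Finset V)) (k : ℕ) : Prop :=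
  ∃ (v : Fin k → V) (e : Fin k → Finset V),
    Function.Injective v ∧ Function.Injective e ∧
    ∀ i : Fin k, e i ∈ H ∧ v i ∈ e i ∧ v (finRotate k i) ∈ e i

set_option maxHeartbeats 1000000 in
theorem stmt_13 (f g : ℕ) (hf : 2 ≤ f) (hg : 2 ≤ g) :
    ∃ c : ℝ, 0 < c ∧ ∀ n : ℕ, f ≤ n →
      ∃ (H : Finset (Finset (Fin n))) (χ : Fin n → Fin f),
        (∀ e ∈ H, e.card = f) ∧
        (∀ e ∈ H, ∀ p : Fin f, (e.filter fun x => χ x = p).card = 1) ∧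
        c * (n : ℝ) ^ (1 + 1 / (g : ℝ)) ≤ (H.card : ℝ) ∧
        ∀ k : ℕ, 2 ≤ k → k ≤ g → ¬ HasBergeCycleLen H k := by
  have hfR : (2:ℝ) ≤ (f:ℝ) := by exact_mod_cast hf
  have hgR : (2:ℝ) ≤ (g:ℝ) := by exact_mod_cast hg
  set c₀ : ℝ := ((2 * (g:ℝ)) * (2 * (f:ℝ)) ^ f)⁻¹ with hc₀
  have hbase : (1:ℝ) ≤ (2 * (f:ℝ)) ^ f := by
    apply one_le_pow₀
    linarith
  have hc₀pos : 0 < c₀ := by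
    rw [hc₀]
    have : (0:ℝ) < (2 * (g:ℝ)) * (2 * (f:ℝ)) ^ f := by positivity
    positivity
  have hc₀le1 : c₀ ≤ 1 := by
    rw [hc₀]
    rw [inv_le_one_iff₀]
    right
    nlinarith
  set c : ℝ := c₀ / (2 * (2 * (f:ℝ)) ^ f) with hc
  have hcpos : 0 < c := by rw [hc]; positivity
  refine ⟨c, hcpos, ?_⟩
  intro n hn
  have hf0 : 0 < f := by omega
  have hn2 : 2 ≤ n := le_trans hf hn
  have hnR : (2:ℝ) ≤ (n:ℝ) := by exact_mod_cast hn2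
  have hnpos : (0:ℝ) < (n:ℝ) := by linarith
  set χ : Fin n → Fin f := fun x => ⟨x.val % f, Nat.mod_lt _ hf0⟩ with hχdef
  set A : Finset (Finset (Fin n)) := trSet χ with hA
  set ε : ℝ := (1:ℝ)/(g:ℝ) - ((f:ℝ) - 1) with hε
  set p : ℝ := c₀ * (n:ℝ) ^ ε with hp
  have hεneg : ε < 0 := by
    rw [hε]
    have h1 : (1:ℝ)/(g:ℝ) ≤ 1/2 := by
      apply div_le_div_of_nonneg_left <;> linarith
    linarith
  have hrpos : (0:ℝ) < (n:ℝ) ^ ε := Real.rpow_pos_of_pos hnpos ε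
  have hp0 : 0 < p := by rw [hp]; positivity
  have hp1 : p < 1 := by
    have h1 : (n:ℝ) ^ ε < 1 := Real.rpow_lt_one_of_one_lt_of_neg (by linarith) hεneg
    calc p = c₀ * (n:ℝ) ^ ε := hp
      _ ≤ 1 * (n:ℝ) ^ ε := mul_le_mul_of_nonneg_right hc₀le1 hrpos.le
      _ = (n:ℝ) ^ ε := one_mul _
      _ < 1 := h1
  set N : ℝ := (n:ℝ) ^ (1 + 1/(g:ℝ)) with hN
  have hN1 : (n:ℝ) ≤ N := by
    rw [hN]
    nth_rewrite 1 [← Real.rpow_one (n:ℝ)]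
    apply Real.rpow_le_rpow_of_exponent_le (by linarith)
    have : (0:ℝ) < (g:ℝ) := by linarith
    have : 0 ≤ 1/(g:ℝ) := by positivity
    linarith
  -- main term lower bound
  have hNe : (n:ℝ) ^ ε * (n:ℝ) ^ (f:ℕ) = N := by
    rw [← Real.rpow_natCast (n:ℝ) f, ← Real.rpow_add hnpos, hN]
    congr 1
    rw [hε]; ring
  have hkey : p * ((n:ℝ)/(2*(f:ℝ)))^f = c₀ / (2*(f:ℝ))^f * N := by
    rw [hp, div_pow, ← hNe]; ring
  have hmain : c₀ / (2 * (f:ℝ)) ^ f * N ≤ p * (A.card : ℝ) := by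
    have hAcard := trSet_card_lb n f hf0 hn
    have hq1 : 1 ≤ n / f := (Nat.one_le_div_iff hf0).mpr hn
    have hqn : n ≤ 2 * f * (n / f) := by
      have hd := Nat.div_add_mod n f
      have hr : n % f < f := Nat.mod_lt _ hf0
      have hfq : f ≤ f * (n / f) := Nat.le_mul_of_pos_right f hq1
      calc n = f * (n/f) + n % f := hd.symm
        _ ≤ f * (n/f) + f := Nat.add_le_add_left hr.le _
        _ ≤ f * (n/f) + f * (n/f) := Nat.add_le_add_left hfq _
        _ = 2 * f * (n/f) := by ring
    have hqR : (n:ℝ) / (2*(f:ℝ)) ≤ ((n/f : ℕ):ℝ) := by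
      rw [div_le_iff₀ (by positivity)]
      calc (n:ℝ) ≤ 2*(f:ℝ)*((n/f:ℕ):ℝ) := by exact_mod_cast hqn
        _ = ((n/f:ℕ):ℝ) * (2*(f:ℝ)) := by ring
    have hpow : ((n:ℝ)/(2*(f:ℝ)))^f ≤ (A.card:ℝ) := by
      calc ((n:ℝ)/(2*(f:ℝ)))^f ≤ (((n/f:ℕ):ℝ))^f :=
            pow_le_pow_left₀ (by positivity) hqR f
        _ = (((n/f)^f : ℕ):ℝ) := by push_cast; ring
        _ ≤ (A.card:ℝ) := by exact_mod_cast hAcard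
    calc c₀/(2*(f:ℝ))^f * N = p * ((n:ℝ)/(2*(f:ℝ)))^f := hkey.symm
      _ ≤ p * (A.card:ℝ) := mul_le_mul_of_nonneg_left hpow hp0.le
  -- bad terms upper bound
  have hbad : ∀ j ∈ Finset.range (g-1),
      p ^ (j+2) * ((structPairs (j+2) A).card : ℝ) ≤ c₀^2 * (n:ℝ) := by
    intro j hj
    rw [Finset.mem_range] at hj
    have hk2 : 2 ≤ j + 2 := by omega
    have hkgn : j + 2 ≤ g := by omega
    have hcnt : ((structPairs (j+2) A).card : ℝ)
        ≤ ((n:ℝ) * (n:ℝ) ^ ((f:ℝ) - 2)) ^ (j+2) := by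
      have h1 := structPairs_count χ hf (j+2) hk2
      have e1 : (n:ℝ)^(f-2 : ℕ) = (n:ℝ) ^ (((f:ℝ) - 2)) := by
        rw [← Real.rpow_natCast (n:ℝ) (f-2)]
        congr 1
        rw [Nat.cast_sub hf]
        norm_num
      calc ((structPairs (j+2) A).card : ℝ)
          ≤ ((n ^ (j+2) * (n ^ (f-2)) ^ (j+2) : ℕ) : ℝ) := by exact_mod_cast h1
        _ = ((n:ℝ) * (n:ℝ) ^ (f - 2 : ℕ)) ^ (j+2) := by push_cast; ring
        _ = ((n:ℝ) * (n:ℝ) ^ ((f:ℝ) - 2)) ^ (j+2) := by rw [e1]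
    have e2 : p * ((n:ℝ) * (n:ℝ) ^ ((f:ℝ)-2)) = c₀ * (n:ℝ) ^ ((1:ℝ)/(g:ℝ)) := by
      have h3 : (n:ℝ)^ε * ((n:ℝ) * (n:ℝ) ^ ((f:ℝ)-2)) = (n:ℝ) ^ ((1:ℝ)/(g:ℝ)) := by
        rw [show (1:ℝ)/(g:ℝ) = ε + (1 + ((f:ℝ)-2)) by rw [hε]; ring,
          Real.rpow_add hnpos, Real.rpow_add hnpos, Real.rpow_one]
      calc p * ((n:ℝ) * (n:ℝ) ^ ((f:ℝ)-2))
          = c₀ * ((n:ℝ)^ε * ((n:ℝ) * (n:ℝ) ^ ((f:ℝ)-2))) := by rw [hp]; ring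
        _ = c₀ * (n:ℝ) ^ ((1:ℝ)/(g:ℝ)) := by rw [h3]
    have hfac : (0:ℝ) ≤ (n:ℝ) * (n:ℝ) ^ ((f:ℝ)-2) := by positivity
    calc p ^ (j+2) * ((structPairs (j+2) A).card : ℝ)
        ≤ p ^ (j+2) * ((n:ℝ) * (n:ℝ) ^ ((f:ℝ) - 2)) ^ (j+2) :=
          mul_le_mul_of_nonneg_left hcnt (by positivity)
      _ = (p * ((n:ℝ) * (n:ℝ) ^ ((f:ℝ) - 2))) ^ (j+2) := (mul_pow _ _ _).symm
      _ = (c₀ * (n:ℝ) ^ ((1:ℝ)/(g:ℝ))) ^ (j+2) := by rw [e2]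
      _ = c₀ ^ (j+2) * ((n:ℝ) ^ ((1:ℝ)/(g:ℝ))) ^ (j+2) := by rw [mul_pow]
      _ ≤ c₀ ^ 2 * (n:ℝ) := by
          have h4 : c₀ ^ (j+2) ≤ c₀ ^ 2 := pow_le_pow_of_le_one hc₀pos.le hc₀le1 hk2
          have h5 : ((n:ℝ) ^ ((1:ℝ)/(g:ℝ))) ^ (j+2) ≤ (n:ℝ) := by
            rw [← Real.rpow_natCast ((n:ℝ) ^ ((1:ℝ)/(g:ℝ))) (j+2), ← Real.rpow_mul hnpos.le]
            nth_rewrite 2 [← Real.rpow_one (n:ℝ)]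
            apply Real.rpow_le_rpow_of_exponent_le (by linarith)
            rw [div_mul_eq_mul_div, one_mul, div_le_one (by linarith)]
            exact_mod_cast hkgn
          have h6 : (0:ℝ) ≤ ((n:ℝ) ^ ((1:ℝ)/(g:ℝ))) ^ (j+2) := by positivity
          exact mul_le_mul h4 h5 h6 (by positivity)
  -- expectation identity
  have hExp : ∑ S ∈ A.powerset, (p ^ S.card * (1-p) ^ (A.card - S.card)) *
        ((S.card:ℝ) - ∑ j ∈ Finset.range (g-1), ((structPairs (j+2) S).card : ℝ))
      = p * (A.card:ℝ) - ∑ j ∈ Finset.range (g-1), p^(j+2) * ((structPairs (j+2) A).card : ℝ) := by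
    simp_rw [mul_sub]
    rw [Finset.sum_sub_distrib]
    congr 1
    · exact exp_card A p
    · simp_rw [Finset.mul_sum]
      rw [Finset.sum_comm]
      exact Finset.sum_congr rfl (fun j _ => exp_bad A p)
  -- W ≥ c * N
  have hW : c * N ≤ ∑ S ∈ A.powerset, (p ^ S.card * (1-p) ^ (A.card - S.card)) *
        ((S.card:ℝ) - ∑ j ∈ Finset.range (g-1), ((structPairs (j+2) S).card : ℝ)) := by
    rw [hExp]
    have hsum : ∑ j ∈ Finset.range (g-1), p^(j+2) * ((structPairs (j+2) A).card : ℝ)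
        ≤ c * N := by
      calc ∑ j ∈ Finset.range (g-1), p^(j+2) * ((structPairs (j+2) A).card : ℝ)
          ≤ ∑ _j ∈ Finset.range (g-1), c₀^2 * (n:ℝ) := Finset.sum_le_sum hbad
        _ = (g-1 : ℕ) * (c₀^2 * (n:ℝ)) := by rw [Finset.sum_const, nsmul_eq_mul, Finset.card_range]
        _ ≤ (g:ℝ) * (c₀^2 * (n:ℝ)) := by
            apply mul_le_mul_of_nonneg_right _ (by positivity)
            exact_mod_cast Nat.cast_le.mpr (Nat.sub_le g 1)
        _ = ((g:ℝ) * c₀) * c₀ * (n:ℝ) := by ring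
        _ ≤ c * N := by
            have hgc : (g:ℝ) * c₀ * c₀ = c := by
              rw [hc, hc₀]
              have hg0 : (g:ℝ) ≠ 0 := by linarith
              have hb0 : (2 * (f:ℝ)) ^ f ≠ 0 := by positivity
              field_simp
            rw [hgc]
            exact mul_le_mul_of_nonneg_left hN1 hcpos.le
    have h2 : c * N + c * N ≤ c₀ / (2 * (f:ℝ)) ^ f * N := by
      apply le_of_eq
      rw [hc]; ring
    linarith [hmain]
  obtain ⟨S, hSmem, hSge⟩ := exists_ge A p hp0.le hp1
      (fun S => (S.card:ℝ) - ∑ j ∈ Finset.range (g-1), ((structPairs (j+2) S).card : ℝ))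
  have hSA : S ⊆ A := Finset.mem_powerset.mp hSmem
  have hFS : c * N ≤ (S.card:ℝ) - ∑ j ∈ Finset.range (g-1), ((structPairs (j+2) S).card : ℝ) :=
    le_trans hW hSge
  set D : Finset (Finset (Fin n)) := (Finset.range (g-1)).biUnion
    (fun j => (structPairs (j+2) S).image fun pe => pe.2 ⟨0, Nat.succ_pos _⟩) with hD
  refine ⟨S \ D, χ, ?_, ?_, ?_, ?_⟩
  · intro e he
    exact tr_card χ (hSA (Finset.mem_sdiff.mp he).1)
  · intro e he
    exact (mem_trSet χ).mp (hSA (Finset.mem_sdiff.mp he).1)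
  · -- card bound
    have hDnat : D.card ≤ ∑ j ∈ Finset.range (g-1), (structPairs (j+2) S).card := by
      rw [hD]
      refine le_trans Finset.card_biUnion_le ?_
      exact Finset.sum_le_sum fun j _ => Finset.card_image_le
    have hDcard : (D.card : ℝ) ≤ ∑ j ∈ Finset.range (g-1), ((structPairs (j+2) S).card : ℝ) := by
      exact_mod_cast hDnat
    have hsd : (S.card : ℝ) ≤ ((S \ D).card : ℝ) + (D.card : ℝ) := by
      exact_mod_cast Finset.card_le_card_sdiff_add_card
    calc c * N ≤ (S.card:ℝ) - ∑ j ∈ Finset.range (g-1), ((structPairs (j+2) S).card : ℝ) := hFS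
      _ ≤ (S.card:ℝ) - (D.card:ℝ) := by linarith
      _ ≤ ((S \ D).card : ℝ) := by linarith
  · -- no short Berge cycles
    intro k hk2 hkg hcyc
    obtain ⟨j, rfl⟩ : ∃ j, k = j + 2 := ⟨k - 2, by omega⟩
    obtain ⟨v, e, hv, he, hcond⟩ := hcyc
    have hpe : (v, e) ∈ structPairs (j+2) S := by
      simp only [structPairs, Finset.mem_filter, Finset.mem_univ, true_and]
      refine ⟨hv, he, fun i => ?_⟩
      obtain ⟨h1, h2, h3⟩ := hcond i
      exact ⟨(Finset.mem_sdiff.mp h1).1, h2, h3⟩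
    have hmemD : e ⟨0, Nat.succ_pos _⟩ ∈ D := by
      rw [hD, Finset.mem_biUnion]
      exact ⟨j, Finset.mem_range.mpr (by omega), Finset.mem_image.mpr ⟨(v, e), hpe, rfl⟩⟩
    have := (hcond ⟨0, Nat.succ_pos _⟩).1
    exact (Finset.mem_sdiff.mp this).2 hmemD
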